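/- Let $(V,\mathcal{B})$ be a cyclic $(v,k,\lambda)$-design with $h$ short orbits and $m$ full orbits. Then $\frac{\lambda(v-1)}{k(k-1)} - 2\lambda\sqrt{k} \leq m \leq \frac{\lambda(v-1)}{k(k-1)} \leq m + h \leq \frac{\lambda(v-1)}{k(k-1)} + 2\lambda\sqrt{k}$. -/

import Mathlib

open Finset

set_option linter.unusedSectionVars false
set_option maxHeartbeats 1000000


lemma aux_divisors_card_le (k : ℕ) : k.divisors.card ≤ 2 * Nat.sqrt k := by
  rcases Nat.eq_zero_or_pos k with rfl | hk
  · simp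
  set s := Nat.sqrt k with hs
  set f : ℕ → ℕ := fun d => if d ≤ s then d else k / d with hf
  have h1 : k.divisors.card ≤ 2 * (k.divisors.image f).card := by
    apply Finset.card_le_mul_card_image
    intro a _
    have hsub : {d ∈ k.divisors | f d = a} ⊆ ({a, k / a} : Finset ℕ) := by
      intro d hd
      simp only [Finset.mem_filter, Nat.mem_divisors, hf] at hd
      obtain ⟨⟨hdvd, hk0⟩, hfd⟩ := hd
      by_cases hds : d ≤ s
      · rw [if_pos hds] at hfd; simp [hfd]
      · rw [if_neg hds] at hfd
        have : d = k / a := by rw [← hfd]; exact (Nat.div_div_self hdvd hk0).symm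
        simp [this]
    calc {d ∈ k.divisors | f d = a}.card ≤ ({a, k/a} : Finset ℕ).card :=
          Finset.card_le_card hsub
      _ ≤ 2 := (Finset.card_insert_le _ _).trans (by simp)
  have h2 : (k.divisors.image f) ⊆ Finset.Icc 1 s := by
    intro a ha
    simp only [Finset.mem_image] at ha
    obtain ⟨d, hd, rfl⟩ := ha
    rw [Nat.mem_divisors] at hd
    have hd1 : 1 ≤ d := Nat.pos_of_dvd_of_pos hd.1 hk
    have hdk : d ≤ k := Nat.le_of_dvd hk hd.1
    have hs1 : 1 ≤ s := Nat.sqrt_pos.mpr hk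
    simp only [hf, Finset.mem_Icc]
    by_cases hds : d ≤ s
    · rw [if_pos hds]; omega
    · rw [if_neg hds]
      constructor
      · exact (Nat.one_le_div_iff (by omega)).mpr hdk
      · have hlt : k / (s+1) < s + 1 := (Nat.div_lt_iff_lt_mul (by omega)).mpr (by have := Nat.lt_succ_sqrt' k; rw [pow_two] at this; exact this)
        have : k / d ≤ k / (s+1) := Nat.div_le_div_left (by omega) (by omega)
        omega
  have h3 : (k.divisors.image f).card ≤ s := by
    calc (k.divisors.image f).card ≤ (Finset.Icc 1 s).card := Finset.card_le_card h2
      _ = s := by rw [Nat.card_Icc]; omega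
  omega


/-- The orbit (as a finset of indices) of a block index under the translation
action of `ZMod v`. -/
def orbF (v : ℕ) [NeZero v] {ι : Type} [DecidableEq ι] [AddAction (ZMod v) ι] (b : ι) :
    Finset ι :=
  Finset.univ.image (fun t : ZMod v => t +ᵥ b)

variable {v : ℕ} [NeZero v] {ι : Type} [DecidableEq ι] [AddAction (ZMod v) ι]

lemma mem_orbF_self (b : ι) : b ∈ orbF v b :=
  Finset.mem_image.mpr ⟨0, Finset.mem_univ _, zero_vadd _ b⟩

lemma orbF_eq_of_mem {b c : ι} (hc : c ∈ orbF v b) : orbF v c = orbF v b := by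
  obtain ⟨t, -, rfl⟩ := Finset.mem_image.mp hc
  ext x
  simp only [orbF, Finset.mem_image, Finset.mem_univ, true_and]
  constructor
  · rintro ⟨u, rfl⟩; exact ⟨u + t, add_vadd u t b⟩
  · rintro ⟨u, rfl⟩; exact ⟨u - t, by rw [← add_vadd, sub_add_cancel]⟩

lemma orbF_disj {b c : ι} (hbc : orbF v b ≠ orbF v c) : Disjoint (orbF v b) (orbF v c) := by
  rw [Finset.disjoint_left]
  intro a hab hac
  exact hbc ((orbF_eq_of_mem hab).symm.trans (orbF_eq_of_mem hac))

lemma orbF_card_le [Fintype ι] (b : ι) : (orbF v b).card ≤ v := by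
  calc (orbF v b).card ≤ (Finset.univ : Finset (ZMod v)).card := Finset.card_image_le
    _ = v := by rw [Finset.card_univ, ZMod.card]

lemma orbF_fiber [Fintype ι] {O : Finset ι}
    (hO : O ∈ (Finset.univ : Finset ι).image (orbF v)) :
    Finset.univ.filter (fun b => orbF v b = O) = O := by
  obtain ⟨c, -, rfl⟩ := Finset.mem_image.mp hO
  ext b
  simp only [Finset.mem_filter, Finset.mem_univ, true_and]
  constructor
  · intro hb; rw [← hb]; exact mem_orbF_self b
  · intro hb; exact orbF_eq_of_mem hb

lemma orbF_sum_card [Fintype ι] :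
    ∑ O ∈ (Finset.univ : Finset ι).image (orbF v), O.card = Fintype.card ι := by
  rw [← Finset.card_univ,
    Finset.card_eq_sum_card_fiberwise (f := orbF v)
      (t := (Finset.univ : Finset ι).image (orbF v))
      (fun b _ => Finset.mem_image_of_mem _ (Finset.mem_univ b))]
  exact Finset.sum_congr rfl fun O hO => by rw [orbF_fiber hO]


section DesignCount
variable {v k lam : ℕ} [NeZero v] {ι : Type} [Fintype ι] [DecidableEq ι]

lemma count_pairs (ℬ : ι → Finset (ZMod v)) (hcard : ∀ b, (ℬ b).card = k)
    (hpair : ∀ x y : ZMod v, x ≠ y →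
      (Finset.univ.filter (fun b => x ∈ ℬ b ∧ y ∈ ℬ b)).card = lam) :
    Fintype.card ι * (k * (k - 1)) = lam * (v * (v - 1)) := by
  have key : ∀ b : ι, (ℬ b).offDiag =
      (Finset.univ : Finset (ZMod v)).offDiag.filter (fun p => p.1 ∈ ℬ b ∧ p.2 ∈ ℬ b) := by
    intro b
    ext p
    simp only [Finset.mem_offDiag, Finset.mem_filter, Finset.mem_univ, true_and]
    tauto
  calc Fintype.card ι * (k * (k-1))
      = ∑ _b : ι, k * (k - 1) := by rw [Finset.sum_const, Finset.card_univ, smul_eq_mul]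
    _ = ∑ b : ι, ((ℬ b).offDiag).card := by
        refine Finset.sum_congr rfl fun b _ => ?_
        rw [Finset.offDiag_card, hcard, Nat.mul_sub, Nat.mul_one]
    _ = ∑ b : ι, ∑ p ∈ (Finset.univ : Finset (ZMod v)).offDiag,
          (if p.1 ∈ ℬ b ∧ p.2 ∈ ℬ b then 1 else 0) := by
        refine Finset.sum_congr rfl fun b _ => ?_
        rw [key b, Finset.card_filter]
    _ = ∑ p ∈ (Finset.univ : Finset (ZMod v)).offDiag, ∑ b : ι,
          (if p.1 ∈ ℬ b ∧ p.2 ∈ ℬ b then 1 else 0) := Finset.sum_comm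
    _ = ∑ p ∈ (Finset.univ : Finset (ZMod v)).offDiag, lam := by
        refine Finset.sum_congr rfl fun p hp => ?_
        rw [← Finset.card_filter]
        exact hpair p.1 p.2 (Finset.mem_offDiag.mp hp).2.2
    _ = lam * (v * (v-1)) := by
        rw [Finset.sum_const, smul_eq_mul, Finset.offDiag_card, Finset.card_univ, ZMod.card,
          Nat.mul_sub, Nat.mul_one, mul_comm]

lemma count_shift (ℬ : ι → Finset (ZMod v))
    (hpair : ∀ x y : ZMod v, x ≠ y →
      (Finset.univ.filter (fun b => x ∈ ℬ b ∧ y ∈ ℬ b)).card = lam)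
    {s : ZMod v} (hs : s ≠ 0) :
    ∑ b : ι, ((ℬ b).filter (fun x => x + s ∈ ℬ b)).card = lam * v := by
  have key : ∀ b : ι, (ℬ b).filter (fun x => x + s ∈ ℬ b) =
      (Finset.univ : Finset (ZMod v)).filter (fun x => x ∈ ℬ b ∧ x + s ∈ ℬ b) := by
    intro b; ext x
    simp only [Finset.mem_filter, Finset.mem_univ, true_and]
  calc ∑ b : ι, ((ℬ b).filter (fun x => x + s ∈ ℬ b)).card
      = ∑ b : ι, ∑ x : ZMod v, (if x ∈ ℬ b ∧ x + s ∈ ℬ b then 1 else 0) := by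
        refine Finset.sum_congr rfl fun b _ => ?_
        rw [key b, Finset.card_filter]
    _ = ∑ x : ZMod v, ∑ b : ι, (if x ∈ ℬ b ∧ x + s ∈ ℬ b then 1 else 0) := Finset.sum_comm
    _ = ∑ _x : ZMod v, lam := by
        refine Finset.sum_congr rfl fun x _ => ?_
        rw [← Finset.card_filter]
        exact hpair x (x + s) (by simp [hs])
    _ = lam * v := by rw [Finset.sum_const, smul_eq_mul, Finset.card_univ, ZMod.card, mul_comm]

end DesignCount

lemma cardK {v : ℕ} [NeZero v] {ℓ d : ℕ} (hld : ℓ * d = v) (hl : 0 < ℓ) (hd : 0 < d) :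
    ((Finset.univ : Finset (ZMod v)).filter (fun x => (d : ZMod v) * x = 0)).card = d := by
  have himg : (Finset.univ : Finset (ZMod v)).filter (fun x => (d:ZMod v) * x = 0)
      = (Finset.range d).image (fun j => ((ℓ * j : ℕ) : ZMod v)) := by
    ext x
    simp only [Finset.mem_filter, Finset.mem_univ, true_and, Finset.mem_image, Finset.mem_range]
    constructor
    · intro hx
      have hx' : ((d * x.val : ℕ) : ZMod v) = 0 := by
        push_cast
        rw [ZMod.natCast_zmod_val]
        exact hx
      rw [ZMod.natCast_eq_zero_iff] at hx'
      have hdl : ℓ ∣ x.val := by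
        have h1 : ℓ * d ∣ x.val * d := by
          rw [hld, mul_comm x.val d]; exact hx'
        exact (Nat.mul_dvd_mul_iff_right hd).mp h1
      obtain ⟨c, hc⟩ := hdl
      refine ⟨c, ?_, ?_⟩
      · have hxv : x.val < v := ZMod.val_lt x
        rw [hc, ← hld] at hxv
        exact Nat.lt_of_mul_lt_mul_left hxv
      · rw [← hc, ZMod.natCast_zmod_val]
    · rintro ⟨j, hj, rfl⟩
      have : ((d * (ℓ * j) : ℕ) : ZMod v) = 0 := by
        rw [ZMod.natCast_eq_zero_iff]
        exact ⟨j, by rw [← hld]; ring⟩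
      push_cast at this ⊢
      linear_combination this
  rw [himg, Finset.card_image_of_injOn, Finset.card_range]
  intro j hj j' hj' he
  simp only [Finset.coe_range, Set.mem_Iio] at hj hj'
  simp only at he
  have hval : ((ℓ * j : ℕ) : ZMod v).val = ((ℓ * j' : ℕ) : ZMod v).val := by rw [he]
  rw [ZMod.val_cast_of_lt (by rw [← hld]; exact (Nat.mul_lt_mul_left hl).mpr hj),
      ZMod.val_cast_of_lt (by rw [← hld]; exact (Nat.mul_lt_mul_left hl).mpr hj')]
    at hval
  exact Nat.eq_of_mul_eq_mul_left hl hval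

lemma orbit_key {v k : ℕ} [NeZero v] {ι : Type} [Fintype ι] [DecidableEq ι]
    [AddAction (ZMod v) ι] (ℬ : ι → Finset (ZMod v)) (hcard : ∀ b, (ℬ b).card = k)
    (hequiv : ∀ (t : ZMod v) (b : ι), ℬ (t +ᵥ b) = (ℬ b).image (· + t))
    (b : ι) :
    (orbF v b).card * (v / (orbF v b).card) = v ∧ (v / (orbF v b).card) ∣ k ∧
      (((orbF v b).card : ℕ) : ZMod v) +ᵥ b = b := by
  classical
  set ℓ := (orbF v b).card with hℓ
  have hl : 0 < ℓ := Finset.card_pos.mpr ⟨b, mem_orbF_self b⟩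
  set Sfin := (Finset.univ : Finset (ZMod v)).filter (fun t => t +ᵥ b = b) with hSfin
  -- orbit-stabilizer
  have hScard : ℓ * Sfin.card = v := by
    have h1 : Fintype.card (AddAction.orbit (ZMod v) b) = ℓ := by
      rw [hℓ, ← Fintype.card_coe]
      apply Fintype.card_congr
      apply Equiv.subtypeEquivRight
      intro x
      rw [AddAction.mem_orbit_iff]
      simp [orbF, eq_comm]
    have h2 : Fintype.card (AddAction.stabilizer (ZMod v) b) = Sfin.card := by
      rw [← Fintype.card_coe]
      apply Fintype.card_congr
      apply Equiv.subtypeEquivRight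
      intro x
      rw [AddAction.mem_stabilizer_iff]
      simp [hSfin]
    have h3 := AddAction.card_orbit_mul_card_stabilizer_eq_card_addGroup (ZMod v) b
    rw [h1, h2, ZMod.card] at h3
    exact h3
  have hdvd : ℓ ∣ v := ⟨Sfin.card, hScard.symm⟩
  set d := v / ℓ with hd
  have hld : ℓ * d = v := Nat.mul_div_cancel' hdvd
  have hdpos : 0 < d :=
    Nat.div_pos (Nat.le_of_dvd (Nat.pos_of_ne_zero (NeZero.ne v)) hdvd) hl
  have hSd : Sfin.card = d := Nat.eq_of_mul_eq_mul_left hl (by rw [hScard, hld])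
  set Kfin := (Finset.univ : Finset (ZMod v)).filter (fun x => (d : ZMod v) * x = 0) with hKfin
  have hKcard : Kfin.card = d := cardK hld hl hdpos
  -- Sfin ⊆ Kfin
  have hSK : Sfin ⊆ Kfin := by
    intro t ht
    have htb : t +ᵥ b = b := by
      simpa [hSfin] using ht
    have htmem : t ∈ AddAction.stabilizer (ZMod v) b := AddAction.mem_stabilizer_iff.mpr htb
    have hz : (Fintype.card (AddAction.stabilizer (ZMod v) b)) •
        (⟨t, htmem⟩ : AddAction.stabilizer (ZMod v) b) = 0 := card_nsmul_eq_zero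
    have hz' : (Fintype.card (AddAction.stabilizer (ZMod v) b)) • t = 0 := by
      have := congrArg (Subtype.val) hz
      simpa using this
    have hcs : Fintype.card (AddAction.stabilizer (ZMod v) b) = d := by
      rw [← hSd, ← Fintype.card_coe]
      apply Fintype.card_congr
      apply Equiv.subtypeEquivRight
      intro x
      rw [AddAction.mem_stabilizer_iff]
      simp [hSfin]
    rw [hcs] at hz'
    simp only [hKfin, Finset.mem_filter, Finset.mem_univ, true_and]
    rw [← nsmul_eq_mul]
    exact hz'
  have hSKeq : Sfin = Kfin := Finset.eq_of_subset_of_card_le hSK (by rw [hKcard, hSd])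
  -- all elements of K stabilize b
  have hstab : ∀ t : ZMod v, (d : ZMod v) * t = 0 → t +ᵥ b = b := by
    intro t ht
    have : t ∈ Kfin := by simp [hKfin, ht]
    rw [← hSKeq] at this
    simpa [hSfin] using this
  -- invariance of ℬ b
  have hinv : ∀ t : ZMod v, (d : ZMod v) * t = 0 → ∀ x ∈ ℬ b, x + t ∈ ℬ b := by
    intro t ht x hx
    have h1 := hequiv t b
    rw [hstab t ht] at h1
    rw [h1]
    exact Finset.mem_image_of_mem _ hx
  -- d ∣ k via fibers of multiplication by d
  have hfib : ∀ x₀ ∈ ℬ b,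
      ((ℬ b).filter (fun x => (d : ZMod v) * x = (d : ZMod v) * x₀)).card = d := by
    intro x₀ hx₀
    have heq : (ℬ b).filter (fun x => (d : ZMod v) * x = (d : ZMod v) * x₀)
        = Kfin.image (fun t => x₀ + t) := by
      ext x
      simp only [Finset.mem_filter, Finset.mem_image, hKfin, Finset.mem_univ, true_and]
      constructor
      · rintro ⟨hxB, hxe⟩
        exact ⟨x - x₀, by rw [mul_sub, hxe, sub_self], by ring⟩
      · rintro ⟨t, ht, rfl⟩
        exact ⟨hinv t ht x₀ hx₀, by rw [mul_add, ht, add_zero]⟩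
    rw [heq, Finset.card_image_of_injective _ (add_right_injective x₀)]
    exact hKcard
  have hdk : d ∣ k := by
    have hcount : k = ∑ y ∈ (ℬ b).image (fun x => (d : ZMod v) * x),
        ((ℬ b).filter (fun x => (d : ZMod v) * x = y)).card := by
      rw [← hcard b]
      exact Finset.card_eq_sum_card_fiberwise (fun x hx => Finset.mem_image_of_mem _ hx)
    have hcount2 : k = ∑ _y ∈ (ℬ b).image (fun x => (d : ZMod v) * x), d := by
      rw [hcount]
      apply Finset.sum_congr rfl
      intro y hy
      obtain ⟨x₀, hx₀, rfl⟩ := Finset.mem_image.mp hy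
      exact hfib x₀ hx₀
    rw [Finset.sum_const, smul_eq_mul] at hcount2
    exact ⟨_, by rw [hcount2, mul_comm]⟩
  refine ⟨hld, hdk, ?_⟩
  apply hstab
  have : ((d * ℓ : ℕ) : ZMod v) = 0 := by
    rw [ZMod.natCast_eq_zero_iff]
    exact ⟨1, by rw [mul_one, ← hld]; ring⟩
  push_cast at this
  exact this
/-- Let `(V,ℬ)` be a cyclic `(v,k,λ)`-design with `h` short orbits and `m` full orbits.
Then `λ(v-1)/(k(k-1)) - 2λ√k ≤ m ≤ λ(v-1)/(k(k-1)) ≤ m + h ≤ λ(v-1)/(k(k-1)) + 2λ√k`. -/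
theorem stmt_8 (v k lam : ℕ) [NeZero v] (hv : 2 ≤ v) (hk : 2 ≤ k) (hlam : 1 ≤ lam)
    (ι : Type) [Fintype ι] [DecidableEq ι] [AddAction (ZMod v) ι]
    (ℬ : ι → Finset (ZMod v))
    (hcard : ∀ b, (ℬ b).card = k)
    (hpair : ∀ x y : ZMod v, x ≠ y →
      (Finset.univ.filter (fun b => x ∈ ℬ b ∧ y ∈ ℬ b)).card = lam)
    (hequiv : ∀ (t : ZMod v) (b : ι), ℬ (t +ᵥ b) = (ℬ b).image (· + t))
    (m h : ℕ)
    (hm : m = ((Finset.univ.image (orbF v (ι := ι))).filter (fun O => O.card = v)).card)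
    (hh : h = ((Finset.univ.image (orbF v (ι := ι))).filter (fun O => O.card < v)).card) :
    (lam * (v - 1) : ℝ) / (k * (k - 1)) - 2 * lam * Real.sqrt k ≤ m ∧
      (m : ℝ) ≤ (lam * (v - 1) : ℝ) / (k * (k - 1)) ∧
      (lam * (v - 1) : ℝ) / (k * (k - 1)) ≤ m + h ∧
      ((m + h : ℕ) : ℝ) ≤ (lam * (v - 1) : ℝ) / (k * (k - 1)) + 2 * lam * Real.sqrt k := by
  classical
  have hv0 : 0 < v := by omega
  have hk0 : 0 < k := by omega
  set Ω : Finset (Finset ι) := Finset.univ.image (orbF v (ι := ι)) with hΩdef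
  set N : ℕ := Fintype.card ι with hNdef
  have hE : N * (k * (k - 1)) = lam * (v * (v - 1)) := count_pairs ℬ hcard hpair
  have hsum : ∑ O ∈ Ω, O.card = N := orbF_sum_card
  have hOle : ∀ O ∈ Ω, O.card ≤ v := by
    intro O hO
    obtain ⟨c, -, rfl⟩ := Finset.mem_image.mp hO
    exact orbF_card_le c
  -- m + h = Ω.card
  have hmh : m + h = Ω.card := by
    have hneg : Ω.filter (fun O => O.card < v) = Ω.filter (fun O => ¬ O.card = v) := by
      apply Finset.filter_congr
      intro O hO
      have := hOle O hO
      constructor <;> omega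
    rw [hm, hh, hneg, Finset.card_filter_add_card_filter_not]
  -- m * v ≤ N
  have hmv : m * v ≤ N := by
    rw [hm, ← hsum]
    calc (Ω.filter (fun O => O.card = v)).card * v
        = ∑ O ∈ Ω.filter (fun O => O.card = v), O.card := by
          rw [Finset.sum_congr rfl (fun O hO => (Finset.mem_filter.mp hO).2),
            Finset.sum_const, smul_eq_mul]
      _ ≤ ∑ O ∈ Ω, O.card := Finset.sum_le_sum_of_subset (Finset.filter_subset _ _)
  -- N ≤ (m+h) * v
  have hNl : N ≤ (m + h) * v := by
    rw [hmh, ← hsum]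
    calc ∑ O ∈ Ω, O.card ≤ ∑ _O ∈ Ω, v := Finset.sum_le_sum hOle
      _ = Ω.card * v := by rw [Finset.sum_const, smul_eq_mul]
  -- bound on h
  set sizes : Finset ℕ := (Ω.filter (fun O => O.card < v)).image (fun O => O.card)
    with hsizes
  have hkey : ∀ ℓ ∈ sizes, ℓ ∣ v ∧ (v / ℓ) ∣ k ∧
      ((Ω.filter (fun O => O.card < v)).filter (fun O => O.card = ℓ)).card ≤ lam := by
    intro ℓ hℓ
    obtain ⟨O₀, hO₀, hO₀card⟩ := Finset.mem_image.mp hℓ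
    have hO₀Ω : O₀ ∈ Ω := (Finset.mem_filter.mp hO₀).1
    have hℓv : ℓ < v := hO₀card ▸ (Finset.mem_filter.mp hO₀).2
    obtain ⟨c₀, -, hc₀⟩ := Finset.mem_image.mp hO₀Ω
    have hkey₀ := orbit_key ℬ hcard hequiv c₀
    rw [hc₀, hO₀card] at hkey₀
    obtain ⟨hld, hdk, -⟩ := hkey₀
    have hℓdvd : ℓ ∣ v := ⟨v / ℓ, hld.symm⟩
    have hℓpos : 0 < ℓ := by
      rcases Nat.eq_zero_or_pos ℓ with h0 | h1
      · rw [h0, zero_mul] at hld; omega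
      · exact h1
    refine ⟨hℓdvd, hdk, ?_⟩
    -- counting bound
    set d := v / ℓ with hddef
    have hdpos : 0 < d := by
      rcases Nat.eq_zero_or_pos d with h0 | h1
      · rw [h0, mul_zero] at hld; omega
      · exact h1
    have hdlek : d ≤ k := Nat.le_of_dvd hk0 hdk
    set s : ZMod v := ((ℓ : ℕ) : ZMod v) with hsdef
    have hs : s ≠ 0 := by
      rw [hsdef, Ne, ZMod.natCast_eq_zero_iff]
      intro hvd
      exact absurd (Nat.le_of_dvd hℓpos hvd) (by omega)
    have hshift := count_shift (lam := lam) ℬ hpair hs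
    -- the set of blocks in orbits of size ℓ
    set T : Finset (Finset ι) := Ω.filter (fun O => O.card = ℓ) with hT
    have hTfix : (Ω.filter (fun O => O.card < v)).filter (fun O => O.card = ℓ) = T := by
      rw [hT]
      ext O
      simp only [Finset.mem_filter]
      constructor
      · rintro ⟨⟨h1, -⟩, h3⟩; exact ⟨h1, h3⟩
      · rintro ⟨h1, h2⟩; exact ⟨⟨h1, h2 ▸ hℓv⟩, h2⟩
    rw [hTfix]
    set U : Finset ι := T.biUnion id with hU
    have hdisj : ∀ O₁ ∈ T, ∀ O₂ ∈ T, O₁ ≠ O₂ → Disjoint (id O₁) (id O₂) := by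
      intro O₁ hO₁ O₂ hO₂ hne
      obtain ⟨c₁, -, hc₁⟩ := Finset.mem_image.mp (Finset.mem_filter.mp hO₁).1
      obtain ⟨c₂, -, hc₂⟩ := Finset.mem_image.mp (Finset.mem_filter.mp hO₂).1
      rw [id, id, ← hc₁, ← hc₂]
      exact orbF_disj (by rw [hc₁, hc₂]; exact hne)
    have hUcard : U.card = T.card * ℓ := by
      calc U.card = ∑ O ∈ T, (id O).card := Finset.card_biUnion hdisj
        _ = ∑ _O ∈ T, ℓ :=
            Finset.sum_congr rfl (fun O hO => (Finset.mem_filter.mp hO).2)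
        _ = T.card * ℓ := by rw [Finset.sum_const, smul_eq_mul]
    have hfull : ∀ b' ∈ U, ((ℬ b').filter (fun x => x + s ∈ ℬ b')).card = k := by
      intro b' hb'
      obtain ⟨O, hOT, hb'O⟩ := Finset.mem_biUnion.mp hb'
      obtain ⟨c', -, hc'⟩ := Finset.mem_image.mp (Finset.mem_filter.mp hOT).1
      have hb'orb : orbF v b' = O := by
        rw [← hc'] at hb'O ⊢
        exact orbF_eq_of_mem hb'O
      have hcardb' : (orbF v b').card = ℓ := by
        rw [hb'orb]; exact (Finset.mem_filter.mp hOT).2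
      have := (orbit_key ℬ hcard hequiv b').2.2
      rw [hcardb'] at this
      -- this : s +ᵥ b' = b'
      have hinv : ∀ x ∈ ℬ b', x + s ∈ ℬ b' := by
        intro x hx
        have h1 := hequiv s b'
        rw [this] at h1
        rw [h1]
        exact Finset.mem_image_of_mem _ hx
      rw [Finset.filter_true_of_mem hinv, hcard]
    have hlower : T.card * ℓ * k ≤ lam * v := by
      rw [← hshift]
      calc T.card * ℓ * k = ∑ b' ∈ U, k := by rw [Finset.sum_const, smul_eq_mul, ← hUcard, mul_comm]
        _ = ∑ b' ∈ U, ((ℬ b').filter (fun x => x + s ∈ ℬ b')).card :=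
            Finset.sum_congr rfl (fun b' hb' => (hfull b' hb').symm)
        _ ≤ ∑ b' : ι, ((ℬ b').filter (fun x => x + s ∈ ℬ b')).card :=
            Finset.sum_le_sum_of_subset (Finset.subset_univ U)
    have : T.card * (ℓ * k) ≤ lam * (ℓ * k) := by
      calc T.card * (ℓ * k) = T.card * ℓ * k := by ring
        _ ≤ lam * v := hlower
        _ = lam * (ℓ * d) := by rw [hld]
        _ ≤ lam * (ℓ * k) := Nat.mul_le_mul_left _ (Nat.mul_le_mul_left _ hdlek)
    exact Nat.le_of_mul_le_mul_right (by simpa [mul_comm] using this) (Nat.mul_pos hℓpos hk0)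
  -- h ≤ lam * (2 * sqrt k)
  have hhb : h ≤ lam * (2 * Nat.sqrt k) := by
    have h1 : h = ∑ ℓ ∈ sizes, ((Ω.filter (fun O => O.card < v)).filter
        (fun O => O.card = ℓ)).card := by
      rw [hh]
      exact Finset.card_eq_sum_card_fiberwise (fun O hO => Finset.mem_image_of_mem _ hO)
    have h2 : h ≤ ∑ _ℓ ∈ sizes, lam := by
      rw [h1]
      exact Finset.sum_le_sum (fun ℓ hℓ => (hkey ℓ hℓ).2.2)
    rw [Finset.sum_const, smul_eq_mul] at h2
    have h3 : sizes.card ≤ k.divisors.card := by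
      apply Finset.card_le_card_of_injOn (fun ℓ => v / ℓ)
      · intro ℓ hℓ
        rw [Finset.mem_coe, Nat.mem_divisors]
        exact ⟨(hkey ℓ hℓ).2.1, by omega⟩
      · intro ℓ₁ hℓ₁ ℓ₂ hℓ₂ he
        have d1 := (hkey ℓ₁ hℓ₁).1
        have d2 := (hkey ℓ₂ hℓ₂).1
        have he' : v / ℓ₁ = v / ℓ₂ := he
        rw [← Nat.div_div_self d1 (by omega), ← Nat.div_div_self d2 (by omega), he']
    calc h ≤ sizes.card * lam := h2
      _ ≤ k.divisors.card * lam := Nat.mul_le_mul_right _ h3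
      _ ≤ (2 * Nat.sqrt k) * lam := Nat.mul_le_mul_right _ (aux_divisors_card_le k)
      _ = lam * (2 * Nat.sqrt k) := mul_comm _ _
  -- real arithmetic
  have hv0r : (0:ℝ) < (v:ℝ) := by exact_mod_cast hv0
  have hkkr : (0:ℝ) < (k:ℝ) * ((k:ℝ) - 1) := by
    have : (2:ℝ) ≤ (k:ℝ) := by exact_mod_cast hk
    nlinarith
  have hEr : (N : ℝ) * ((k:ℝ) * ((k:ℝ) - 1)) = (lam:ℝ) * ((v:ℝ) * ((v:ℝ) - 1)) := by
    have hc := congrArg (Nat.cast : ℕ → ℝ) hE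
    push_cast [Nat.cast_sub (by omega : 1 ≤ k), Nat.cast_sub (by omega : 1 ≤ v)] at hc
    convert hc using 2 <;> push_cast <;> ring
  have hD : (lam : ℝ) * ((v:ℝ) - 1) / ((k:ℝ) * ((k:ℝ) - 1)) = (N:ℝ) / (v:ℝ) := by
    rw [div_eq_div_iff (ne_of_gt hkkr) (ne_of_gt hv0r)]
    nlinarith [hEr]
  have hsqrt : (Nat.sqrt k : ℝ) ≤ Real.sqrt k := by
    rw [Real.le_sqrt (by positivity) (by positivity)]
    exact_mod_cast Nat.sqrt_le' k
  have hhr : (h : ℝ) ≤ 2 * (lam:ℝ) * Real.sqrt k := by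
    have h1 : (h : ℝ) ≤ (lam:ℝ) * (2 * (Nat.sqrt k : ℝ)) := by exact_mod_cast hhb
    nlinarith [hsqrt, (by exact_mod_cast hlam : (1:ℝ) ≤ (lam:ℝ))]
  have hm2 : (m : ℝ) ≤ (lam : ℝ) * ((v:ℝ) - 1) / ((k:ℝ) * ((k:ℝ) - 1)) := by
    rw [hD, le_div_iff₀ hv0r]
    exact_mod_cast hmv
  have hmh2 : (lam : ℝ) * ((v:ℝ) - 1) / ((k:ℝ) * ((k:ℝ) - 1)) ≤ (m:ℝ) + (h:ℝ) := by
    rw [hD, div_le_iff₀ hv0r]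
    exact_mod_cast hNl
  refine ⟨?_, hm2, by push_cast; exact hmh2, ?_⟩
  · linarith
  · push_cast
    linarith
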